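/- If C is a complex conference matrix of order n (zero diagonal, unimodular off-diagonal entries, C·C* = (n-1)·I), then the 2n×2n block matrix H = [[C+I, C*-I],[C-I, -C*-I]] is a complex Hadamard matrix: all entries of H have modulus 1 and H·H* = 2n·I. -/

import Mathlib

open Matrix

/-- If `C` is a symmetric complex conference matrix of order `n`, then the
`2n×2n` block matrix `H = [[C+I, C*-I],[C-I, -C*-I]]` is a complex Hadamard matrix. -/
theorem conference_to_hadamard (n : ℕ) (C : Matrix (Fin n) (Fin n) ℂ)
    (hdiag : ∀ i, C i i = 0)
    (hoff : ∀ i j, i ≠ j → ‖C i j‖ = 1)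
    (hsymm : C.IsSymm)
    (hconf : C * Cᴴ = ((n : ℂ) - 1) • 1)
    (H : Matrix (Fin n ⊕ Fin n) (Fin n ⊕ Fin n) ℂ)
    (hH : H = Matrix.fromBlocks (C + 1) (Cᴴ - 1) (C - 1) (-Cᴴ - 1)) :
    (∀ i j, ‖H i j‖ = 1) ∧ H * Hᴴ = (2 * (n : ℂ)) • 1 := by
  subst hH
  have hmap : C.map (starRingEnd ℂ) = Cᴴ := by
    ext i j
    simp [Matrix.conjTranspose_apply, hsymm.apply i j]
  have hmap2 : Cᴴ.map (starRingEnd ℂ) = C := by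
    ext i j
    simp [Matrix.conjTranspose_apply, hsymm.apply i j]
  have h2 : Cᴴ * C = ((n : ℂ) - 1) • 1 := by
    have h := congrArg (fun M => Matrix.map M (starRingEnd ℂ)) hconf
    simp only [Matrix.map_mul, hmap, hmap2] at h
    rw [h]
    ext i j
    simp [Matrix.one_apply]
    split_ifs <;> simp
  constructor
  · rintro (i | i) (j | j)
    · by_cases h : i = j
      · subst h
        simp [hdiag i]
      · simp [Matrix.one_apply_ne h, hoff i j h]
    · by_cases h : i = j
      · subst h
        simp [Matrix.conjTranspose_apply, hdiag i]
      · have : j ≠ i := fun hji => h hji.symm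
        simp [Matrix.one_apply_ne h, Matrix.conjTranspose_apply, hoff j i this]
    · by_cases h : i = j
      · subst h
        simp [hdiag i]
      · simp [Matrix.one_apply_ne h, hoff i j h]
    · by_cases h : i = j
      · subst h
        simp [Matrix.conjTranspose_apply, hdiag i]
      · have : j ≠ i := fun hji => h hji.symm
        simp [Matrix.one_apply_ne h, Matrix.conjTranspose_apply, hoff j i this]
  · have e11 : (C + 1) * (C + 1)ᴴ + (Cᴴ - 1) * (Cᴴ - 1)ᴴ = (2 * (n : ℂ)) • 1 := by
      have expand : (C + 1) * (C + 1)ᴴ + (Cᴴ - 1) * (Cᴴ - 1)ᴴ = C * Cᴴ + Cᴴ * C + 2 := by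
        simp only [Matrix.conjTranspose_add, Matrix.conjTranspose_sub,
          Matrix.conjTranspose_one, Matrix.conjTranspose_conjTranspose]
        rw [show (2 : Matrix (Fin n) (Fin n) ℂ) = 1 + 1 from one_add_one_eq_two.symm]
        noncomm_ring
      rw [expand, hconf, h2, show (2 : Matrix (Fin n) (Fin n) ℂ) = (2 : ℂ) • 1 from by
        rw [Algebra.smul_def, map_ofNat, mul_one], ← add_smul, ← add_smul]
      congr 1
      ring
    have e12 : (C + 1) * (C - 1)ᴴ + (Cᴴ - 1) * (-Cᴴ - 1)ᴴ = 0 := by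
      have expand : (C + 1) * (C - 1)ᴴ + (Cᴴ - 1) * (-Cᴴ - 1)ᴴ = C * Cᴴ - Cᴴ * C := by
        simp only [Matrix.conjTranspose_add, Matrix.conjTranspose_sub,
          Matrix.conjTranspose_neg, Matrix.conjTranspose_one,
          Matrix.conjTranspose_conjTranspose]
        noncomm_ring
      rw [expand, hconf, h2, sub_self]
    have e21 : (C - 1) * (C + 1)ᴴ + (-Cᴴ - 1) * (Cᴴ - 1)ᴴ = 0 := by
      have expand : (C - 1) * (C + 1)ᴴ + (-Cᴴ - 1) * (Cᴴ - 1)ᴴ = C * Cᴴ - Cᴴ * C := by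
        simp only [Matrix.conjTranspose_add, Matrix.conjTranspose_sub,
          Matrix.conjTranspose_neg, Matrix.conjTranspose_one,
          Matrix.conjTranspose_conjTranspose]
        noncomm_ring
      rw [expand, hconf, h2, sub_self]
    have e22 : (C - 1) * (C - 1)ᴴ + (-Cᴴ - 1) * (-Cᴴ - 1)ᴴ = (2 * (n : ℂ)) • 1 := by
      have expand : (C - 1) * (C - 1)ᴴ + (-Cᴴ - 1) * (-Cᴴ - 1)ᴴ = C * Cᴴ + Cᴴ * C + 2 := by
        simp only [Matrix.conjTranspose_add, Matrix.conjTranspose_sub,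
          Matrix.conjTranspose_neg, Matrix.conjTranspose_one,
          Matrix.conjTranspose_conjTranspose]
        rw [show (2 : Matrix (Fin n) (Fin n) ℂ) = 1 + 1 from one_add_one_eq_two.symm]
        noncomm_ring
      rw [expand, hconf, h2, show (2 : Matrix (Fin n) (Fin n) ℂ) = (2 : ℂ) • 1 from by
        rw [Algebra.smul_def, map_ofNat, mul_one], ← add_smul, ← add_smul]
      congr 1
      ring
    have hone : (2 * (n : ℂ)) • (1 : Matrix (Fin n ⊕ Fin n) (Fin n ⊕ Fin n) ℂ) =
        Matrix.fromBlocks ((2 * (n : ℂ)) • 1) 0 0 ((2 * (n : ℂ)) • 1) := by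
      rw [← Matrix.fromBlocks_one, Matrix.fromBlocks_smul, smul_zero]
    rw [Matrix.fromBlocks_conjTranspose, Matrix.fromBlocks_multiply, hone, e11, e12, e21, e22]
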